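/- For every x ∈ ℝ² with x ≠ 0, the convective derivative satisfies ((u·∇)u)(x) = −(h(|x| − δ)²/|x|²) · x, where ((u·∇)u)(x) denotes the derivative of u at x applied to the vector u(x); that is, the convective derivative of the parallel laminar flow is purely centripetal, pointing toward the origin with magnitude |u(x)|²/|x|. -/

import Mathlib

noncomputable section

/-- Poiseuille-type speed profile `h(r) = α₁ r − (α₂/2) r²`. -/
def prof (α₁ α₂ r : ℝ) : ℝ := α₁ * r - α₂ / 2 * r ^ 2

/-- Euclidean norm on `ℝ × ℝ`. -/
def nrm (x : ℝ × ℝ) : ℝ := Real.sqrt (x.1 ^ 2 + x.2 ^ 2)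

/-- Parallel laminar flow `u(x) = h(|x| − δ) (x₂, −x₁)/|x|` around the origin. -/
def vel (δ α₁ α₂ : ℝ) (x : ℝ × ℝ) : ℝ × ℝ :=
  (prof α₁ α₂ (nrm x - δ) / nrm x) • (x.2, -x.1)

/-- The convective derivative `(u·∇)u` of the parallel laminar flow is purely
centripetal: it points toward the origin with magnitude `|u(x)|²/|x|`. -/
theorem convective_derivative_of_parallel_laminar_flow
    (δ α₁ α₂ : ℝ) (hδ : 0 < δ) (hα₁ : 0 < α₁) (hα₂ : 0 < α₂)
    (x : ℝ × ℝ) (hx : x ≠ 0) :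
    fderiv ℝ (vel δ α₁ α₂) x (vel δ α₁ α₂ x)
      = (-(prof α₁ α₂ (nrm x - δ) ^ 2 / nrm x ^ 2)) • x := by
  have hq0 : 0 < x.1 ^ 2 + x.2 ^ 2 := by
    have h : x.1 ≠ 0 ∨ x.2 ≠ 0 := by
      by_contra h
      push_neg at h
      exact hx (Prod.ext h.1 h.2)
    rcases h with h | h
    · have := pow_pos (abs_pos.mpr h) 2
      nlinarith [sq_nonneg x.2, sq_abs x.1]
    · nlinarith [sq_nonneg x.1, sq_abs x.2, pow_pos (abs_pos.mpr h) 2]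
  have hs0 : 0 < nrm x := Real.sqrt_pos.mpr hq0
  set s := nrm x with hsdef
  -- derivative of q(y) = y.1^2 + y.2^2
  have hq : HasFDerivAt (fun y : ℝ × ℝ => y.1 ^ 2 + y.2 ^ 2)
      ((x.1 • ContinuousLinearMap.fst ℝ ℝ ℝ + x.1 • ContinuousLinearMap.fst ℝ ℝ ℝ)
        + (x.2 • ContinuousLinearMap.snd ℝ ℝ ℝ + x.2 • ContinuousLinearMap.snd ℝ ℝ ℝ)) x := by
    have h1 := (hasFDerivAt_fst (𝕜 := ℝ) (p := x)).mul (hasFDerivAt_fst (𝕜 := ℝ) (p := x))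
    have h2 := (hasFDerivAt_snd (𝕜 := ℝ) (p := x)).mul (hasFDerivAt_snd (𝕜 := ℝ) (p := x))
    simpa [pow_two, Pi.mul_def, Pi.add_def] using h1.add h2
  -- derivative of nrm
  have hn : HasFDerivAt nrm
      ((1 / (2 * Real.sqrt (x.1 ^ 2 + x.2 ^ 2))) •
        ((x.1 • ContinuousLinearMap.fst ℝ ℝ ℝ + x.1 • ContinuousLinearMap.fst ℝ ℝ ℝ)
          + (x.2 • ContinuousLinearMap.snd ℝ ℝ ℝ + x.2 • ContinuousLinearMap.snd ℝ ℝ ℝ))) x := by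
    have := (Real.hasDerivAt_sqrt hq0.ne').comp_hasFDerivAt x hq
    simpa [show nrm = fun y : ℝ × ℝ => Real.sqrt (y.1 ^ 2 + y.2 ^ 2) from rfl, Function.comp_def] using this
  -- derivative of ψ(r) = prof (r - δ) / r at s
  have hψnum : HasDerivAt (fun r : ℝ => prof α₁ α₂ (r - δ))
      (α₁ * 1 - α₂ / 2 * (↑2 * (s - δ) ^ 1 * 1)) s := by
    have hb : HasDerivAt (fun r : ℝ => r - δ) 1 s := (hasDerivAt_id s).sub_const δ
    have := ((hb.pow 2).const_mul (α₂ / 2))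
    have h1 := hb.const_mul α₁
    simpa [prof, Pi.sub_def] using h1.sub this
  have hψ : HasDerivAt (fun r : ℝ => prof α₁ α₂ (r - δ) / r)
      (((α₁ * 1 - α₂ / 2 * (↑2 * (s - δ) ^ 1 * 1)) * s - prof α₁ α₂ (s - δ) * 1) / s ^ 2) s :=
    hψnum.div (hasDerivAt_id s) hs0.ne'
  -- derivative of the scalar factor
  have hf : HasFDerivAt (fun y : ℝ × ℝ => prof α₁ α₂ (nrm y - δ) / nrm y)
      ((((α₁ * 1 - α₂ / 2 * (↑2 * (s - δ) ^ 1 * 1)) * s - prof α₁ α₂ (s - δ) * 1) / s ^ 2) •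
        ((1 / (2 * Real.sqrt (x.1 ^ 2 + x.2 ^ 2))) •
          ((x.1 • ContinuousLinearMap.fst ℝ ℝ ℝ + x.1 • ContinuousLinearMap.fst ℝ ℝ ℝ)
            + (x.2 • ContinuousLinearMap.snd ℝ ℝ ℝ + x.2 • ContinuousLinearMap.snd ℝ ℝ ℝ)))) x := by
    simpa [Function.comp_def] using hψ.comp_hasFDerivAt x hn
  -- derivative of g(y) = (y.2, -y.1)
  have hg : HasFDerivAt (fun y : ℝ × ℝ => (y.2, -y.1))
      ((ContinuousLinearMap.snd ℝ ℝ ℝ).prod (-(ContinuousLinearMap.fst ℝ ℝ ℝ))) x := by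
    exact ((ContinuousLinearMap.snd ℝ ℝ ℝ).prod (-(ContinuousLinearMap.fst ℝ ℝ ℝ))).hasFDerivAt
  have hfun : vel δ α₁ α₂ = fun y : ℝ × ℝ =>
      (prof α₁ α₂ (nrm y - δ) / nrm y) • (y.2, -y.1) := rfl
  have hvel := hf.smul hg
  rw [hfun, show fderiv ℝ (fun y : ℝ × ℝ => (prof α₁ α₂ (nrm y - δ) / nrm y) • (y.2, -y.1)) x = _ from hvel.fderiv]
  have hss : Real.sqrt (x.1 ^ 2 + x.2 ^ 2) = s := rfl
  simp only [vel, ← hsdef, hss, ContinuousLinearMap.add_apply, ContinuousLinearMap.smul_apply,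
    ContinuousLinearMap.smulRight_apply, ContinuousLinearMap.prod_apply,
    ContinuousLinearMap.neg_apply, ContinuousLinearMap.coe_fst', ContinuousLinearMap.coe_snd',
    Prod.smul_mk, Prod.mk_add_mk, smul_eq_mul, Prod.smul_fst, Prod.smul_snd]
  have hsne : s ≠ 0 := hs0.ne'
  apply Prod.ext <;> simp [Prod.ext_iff] <;> field_simp <;> ring
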